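/- If C is a semidualizing R-module over a commutative Noetherian ring R and p is a prime ideal, then Hom_R(C, E_R(R/p)) has the t(p)-property: each r ∈ R \ p acts on it as an isomorphism, and every element is annihilated by some power of p. -/

import Mathlib

open CategoryTheory

universe u

variable (R : Type u) [CommRing R]

/-- `M` has the `t(p)`-property. -/
def HasTProperty (p : Ideal R) (M : Type u) [AddCommGroup M] [Module R M] : Prop :=
  (∀ r : R, r ∉ p → Function.Bijective (fun x : M => r • x)) ∧
    ∀ x : M, ∃ m : ℕ, 1 ≤ m ∧ ∀ a ∈ p ^ m, a • x = 0

/-- `E` is an injective envelope of `M`. -/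
def IsInjectiveEnvelope (M E : Type u) [AddCommGroup M] [Module R M]
    [AddCommGroup E] [Module R E] : Prop :=
  Module.Injective R E ∧ ∃ f : M →ₗ[R] E, Function.Injective f ∧
    ∀ N : Submodule R E, N ≠ ⊥ → N ⊓ LinearMap.range f ≠ ⊥

/-- `C` is a semidualizing `R`-module. -/
def IsSemidualizing (C : Type u) [AddCommGroup C] [Module R C] : Prop :=
  Module.Finite R C ∧ Function.Bijective (LinearMap.lsmul R C) ∧
    ∀ i : ℕ, 0 < i → Subsingleton
      (((Ext R (ModuleCat.{u} R) i).obj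
        (Opposite.op (ModuleCat.of R C))).obj (ModuleCat.of R C))

/-- `C` has finite injective dimension over `R`. -/
def HasFiniteInjectiveDimension (C : Type u) [AddCommGroup C] [Module R C] : Prop :=
  ∃ n : ℕ, ∀ (N : ModuleCat.{u} R) (i : ℕ), n < i →
    Subsingleton (((Ext R (ModuleCat.{u} R) i).obj (Opposite.op N)).obj (ModuleCat.of R C))

/-- `C` is a dualizing `R`-module. -/
def IsDualizing (C : Type u) [AddCommGroup C] [Module R C] : Prop :=
  IsSemidualizing R C ∧ HasFiniteInjectiveDimension R C

/-- `M` is `C`-injective. -/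
def IsCInjective (C : Type u) [AddCommGroup C] [Module R C]
    (M : Type u) [AddCommGroup M] [Module R M] : Prop :=
  ∃ (I : Type u) (_ : AddCommGroup I) (_ : Module R I),
    Module.Injective R I ∧ Nonempty (M ≃ₗ[R] (C →ₗ[R] I))

/-- `Tor_i^R(M,N)` as a module category object. -/
noncomputable def TorMod (i : ℕ) (M N : Type u) [AddCommGroup M] [Module R M]
    [AddCommGroup N] [Module R N] : ModuleCat.{u} R :=
  ((Tor (ModuleCat.{u} R) i).obj (ModuleCat.of R M)).obj (ModuleCat.of R N)

/-- The Krull dimension of a module, as dimension of `R ⧸ Ann M`. -/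
noncomputable def moduleKrullDim (M : Type u) [AddCommGroup M] [Module R M] :
    WithBot (WithTop ℕ) :=
  ringKrullDim (R ⧸ Module.annihilator R M)

section Aux

variable {R}

/-- smul by `r ∉ p` is injective on an essential extension of `R ⧸ p`. -/
lemma aux_smul_injective (p : Ideal R) (hp : p.IsPrime) {E : Type u} [AddCommGroup E]
    [Module R E] (f : (R ⧸ p) →ₗ[R] E) (hf : Function.Injective f)
    (hess : ∀ N : Submodule R E, N ≠ ⊥ → N ⊓ LinearMap.range f ≠ ⊥)
    {r : R} (hr : r ∉ p) : Function.Injective (fun x : E => r • x) := by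
  have hker : LinearMap.ker (LinearMap.lsmul R E r) = ⊥ := by
    by_contra h
    apply hess _ h
    rw [Submodule.eq_bot_iff]
    rintro x ⟨hx1, a, rfl⟩
    obtain ⟨a', rfl⟩ := Ideal.Quotient.mk_surjective a
    have h1 : r • f (Ideal.Quotient.mk p a') = 0 := hx1
    rw [← map_smul] at h1
    have h2 : r • (Ideal.Quotient.mk p a') = 0 := by
      rw [← map_zero f] at h1; exact hf h1
    have h3 : Ideal.Quotient.mk p (r * a') = 0 := by
      rw [← smul_eq_mul]
      exact (Submodule.Quotient.mk_smul p r a').trans h2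
    rw [Ideal.Quotient.eq_zero_iff_mem] at h3
    have h4 : a' ∈ p := ((hp.mem_or_mem h3).resolve_left hr)
    simp [Ideal.Quotient.eq_zero_iff_mem.mpr h4]
  intro x y hxy
  exact LinearMap.ker_eq_bot.mp hker hxy

/-- smul by `r ∉ p` is bijective on an injective essential extension of `R ⧸ p`. -/
lemma aux_smul_bijective (p : Ideal R) (hp : p.IsPrime) {E : Type u} [AddCommGroup E]
    [Module R E] (hinj : Module.Injective R E) (f : (R ⧸ p) →ₗ[R] E)
    (hf : Function.Injective f)
    (hess : ∀ N : Submodule R E, N ≠ ⊥ → N ⊓ LinearMap.range f ≠ ⊥)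
    {r : R} (hr : r ∉ p) : Function.Bijective (fun x : E => r • x) := by
  have hi := aux_smul_injective p hp f hf hess hr
  refine ⟨hi, ?_⟩
  -- extend the identity along φ = r • ·
  have hφi : Function.Injective (LinearMap.lsmul R E r) := hi
  obtain ⟨ψ, hψ⟩ := hinj.out (LinearMap.lsmul R E r) hφi LinearMap.id
  -- e = φ ∘ ψ; show ker e = ⊥ via essentiality, then e = id
  set e : E →ₗ[R] E := (LinearMap.lsmul R E r).comp ψ with he
  have hkere : LinearMap.ker e = ⊥ := by
    by_contra h
    apply hess _ h
    rw [Submodule.eq_bot_iff]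
    rintro x ⟨hx1, a, rfl⟩
    have h1 : e (f a) = 0 := hx1
    have h2 : e (r • f a) = r • f a := by
      have : r • f a = (LinearMap.lsmul R E r) (f a) := rfl
      rw [this]
      show (LinearMap.lsmul R E r) (ψ ((LinearMap.lsmul R E r) (f a))) = _
      rw [hψ]
      rfl
    have h3 : e (r • f a) = 0 := by rw [map_smul, h1, smul_zero]
    have h4 : r • f a = 0 := h3 ▸ h2.symm
    have h5 : f a = 0 := by
      have := hi (a₁ := f a) (a₂ := 0) (by simpa using h4)
      exact this
    rw [h5]
  have heinj : Function.Injective e := LinearMap.ker_eq_bot.mp hkere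
  -- e is idempotent, hence identity
  have hid : ∀ x : E, e x = x := by
    intro x
    apply heinj
    show e (e x) = e x
    have : e x = (LinearMap.lsmul R E r) (ψ x) := rfl
    rw [this]
    show (LinearMap.lsmul R E r) (ψ ((LinearMap.lsmul R E r) (ψ x))) = _
    rw [hψ]
    rfl
  intro x
  exact ⟨ψ x, hid x⟩

/-- every element of an essential extension of `R ⧸ p` is killed by a power of `p`. -/
lemma aux_torsion [IsNoetherianRing R] (p : Ideal R) {E : Type u} [AddCommGroup E]
    [Module R E] (f : (R ⧸ p) →ₗ[R] E) (hf : Function.Injective f)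
    (hess : ∀ N : Submodule R E, N ≠ ⊥ → N ⊓ LinearMap.range f ≠ ⊥)
    (x : E) : ∃ m : ℕ, 1 ≤ m ∧ ∀ a ∈ p ^ m, a • x = 0 := by
  -- step 1: each s ∈ p kills x after some power
  have key : ∀ s ∈ p, ∃ n : ℕ, s ^ n • x = 0 := by
    intro s hs
    -- chain of annihilators of s^n • x
    set J : ℕ →o Ideal R :=
      ⟨fun n => LinearMap.ker (LinearMap.toSpanSingleton R E (s ^ n • x)), by
        intro a b hab c hc
        simp only [LinearMap.mem_ker, LinearMap.toSpanSingleton_apply] at hc ⊢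
        obtain ⟨k, rfl⟩ := Nat.exists_eq_add_of_le hab
        rw [pow_add, mul_comm, mul_smul, smul_comm, hc, smul_zero]⟩ with hJ
    obtain ⟨n, hn⟩ := monotone_stabilizes_iff_noetherian.mpr
      (inferInstance : IsNoetherian R R) J
    by_cases hy : s ^ n • x = 0
    · exact ⟨n, hy⟩
    exfalso
    set y := s ^ n • x with hy'
    have hspan : Submodule.span R {y} ≠ ⊥ := by
      rw [Submodule.span_singleton_eq_bot.ne]; exact hy
    have hne := hess _ hspan
    obtain ⟨z, ⟨hz1, hz2⟩, hz3⟩ := Submodule.exists_mem_ne_zero_of_ne_bot hne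
    obtain ⟨a, rfl⟩ := hz2
    obtain ⟨r, hr⟩ := Submodule.mem_span_singleton.mp hz1
    -- s • f a = 0 since s ∈ p
    obtain ⟨a', rfl⟩ := Ideal.Quotient.mk_surjective a
    have hsa : s • (Ideal.Quotient.mk p a' : R ⧸ p) = 0 := by
      have : Ideal.Quotient.mk p (s * a') = 0 :=
        Ideal.Quotient.eq_zero_iff_mem.mpr (p.mul_mem_right a' hs)
      rw [← smul_eq_mul] at this
      exact (Submodule.Quotient.mk_smul p s a').symm.trans this
    have h1 : s • f (Ideal.Quotient.mk p a') = 0 := by rw [← map_smul, hsa, map_zero]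
    -- so s • (r • y) = 0, i.e. r ∈ J (n+1) = J n, so r • y = 0
    have h2 : r • s ^ (n + 1) • x = 0 := by
      have : s • r • y = 0 := by rw [hr, h1]
      rw [smul_comm] at this
      rw [pow_succ, mul_comm, mul_smul]
      exact this
    have h3 : r ∈ J (n + 1) := by
      simp only [hJ, OrderHom.coe_mk, LinearMap.mem_ker, LinearMap.toSpanSingleton_apply]
      exact h2
    rw [← hn (n + 1) (Nat.le_succ n)] at h3
    have h4 : r • y = 0 := by
      exact h3
    exact hz3 (hr ▸ h4)
  -- step 2: p ≤ radical of annihilator, use fg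
  set I : Ideal R := LinearMap.ker (LinearMap.toSpanSingleton R E x) with hI
  have hle : p ≤ I.radical := by
    intro s hs
    obtain ⟨n, hn⟩ := key s hs
    exact ⟨n, by simpa [hI, LinearMap.mem_ker] using hn⟩
  obtain ⟨n, hn⟩ := Ideal.exists_pow_le_of_le_radical_of_fg hle
    (IsNoetherian.noetherian p)
  refine ⟨max n 1, le_max_right n 1, fun a ha => ?_⟩
  have : a ∈ p ^ n := Ideal.pow_le_pow_right (le_max_left n 1) ha
  have := hn this
  simpa [hI, LinearMap.mem_ker] using this

end Aux

theorem stmt0' [IsNoetherianRing R] (C : Type u) [AddCommGroup C] [Module R C]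
    (hC : Module.Finite R C) (p : Ideal R) (hp : p.IsPrime)
    (E : Type u) [AddCommGroup E] [Module R E]
    (hinj : Module.Injective R E) (f : (R ⧸ p) →ₗ[R] E) (hf : Function.Injective f)
    (hess : ∀ N : Submodule R E, N ≠ ⊥ → N ⊓ LinearMap.range f ≠ ⊥) :
    (∀ r : R, r ∉ p → Function.Bijective (fun g : C →ₗ[R] E => r • g)) ∧
      ∀ g : C →ₗ[R] E, ∃ m : ℕ, 1 ≤ m ∧ ∀ a ∈ p ^ m, a • g = 0 := by
  constructor
  · intro r hr
    have hb := aux_smul_bijective p hp hinj f hf hess hr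
    constructor
    · intro g₁ g₂ hg
      ext c
      have : r • g₁ c = r • g₂ c := by
        have := congrArg (fun h : C →ₗ[R] E => h c) hg
        simpa using this
      exact hb.injective this
    · intro g
      -- inverse of r • · as a linear equiv
      let φ : E ≃ₗ[R] E := LinearEquiv.ofBijective (LinearMap.lsmul R E r) hb
      refine ⟨(φ.symm : E →ₗ[R] E).comp g, ?_⟩
      ext c
      show r • (φ.symm (g c)) = g c
      have : r • (φ.symm (g c)) = φ (φ.symm (g c)) := rfl
      rw [this, φ.apply_symm_apply]
  · intro g
    obtain ⟨S, hS⟩ := hC.fg_top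
    -- for each generator, get a power of p killing its image
    choose m hm1 hm2 using fun c : E => aux_torsion p f hf hess c
    set M : ℕ := S.sup (fun c => m (g c)) + 1 with hM
    refine ⟨M, Nat.le_add_left 1 _, fun a ha => ?_⟩
    ext c
    show a • g c = 0
    have hc : c ∈ LinearMap.ker (a • g) := by
      have : c ∈ (⊤ : Submodule R C) := trivial
      rw [← hS] at this
      refine Submodule.span_induction ?_ ?_ ?_ ?_ this
      · intro s hs
        have hms : m (g s) ≤ M := by
          have h' : m (g s) ≤ S.sup (fun c => m (g c)) :=
            Finset.le_sup (f := fun c => m (g c)) (Finset.mem_coe.mp hs)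
          omega
        have ha' : a ∈ p ^ m (g s) := Ideal.pow_le_pow_right hms ha
        simp only [LinearMap.mem_ker, LinearMap.smul_apply]
        exact hm2 (g s) a ha'
      · simp
      · intro u v _ _ hu hv
        exact (LinearMap.ker (a • g)).add_mem hu hv
      · intro t u _ hu
        exact (LinearMap.ker (a • g)).smul_mem t hu
    simpa using hc

theorem stmt0 [IsNoetherianRing R] (C : Type u) [AddCommGroup C] [Module R C]
    (hC : IsSemidualizing R C) (p : Ideal R) (hp : p.IsPrime)
    (E : Type u) [AddCommGroup E] [Module R E]
    (hE : IsInjectiveEnvelope R (R ⧸ p) E) :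
    HasTProperty R p (C →ₗ[R] E) := by
  obtain ⟨hinj, f, hf, hess⟩ := hE
  exact stmt0' R C hC.1 p hp E hinj f hf hess
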